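/- Let G be a finite connected simple graph with n vertices and m edges, w : D(G) → ℍ an arc weight, and K, L, J₀, W, D_w as below. Then for every t ∈ ℂ with t² ≠ 1, ψ(ᵀL)·(I_{4m} + t·ψ(J₀))⁻¹·ψ(K) = (1 − t²)⁻¹·ψ(ᵀW) − t·(1 − t²)⁻¹·ψ(D_w). -/

import Mathlib

noncomputable section

open Matrix

/-- Simplex part of a quaternion: `q = Sc q + j * Pc q`. -/
def Sc (q : Quaternion ℝ) : ℂ := ⟨q.re, q.imI⟩

/-- Perplex part of a quaternion: `q = Sc q + j * Pc q`. -/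
def Pc (q : Quaternion ℝ) : ℂ := ⟨q.imJ, -q.imK⟩

/-- The map ψ sending a quaternionic matrix `M = M^S + j·M^P` (symplectic decomposition)
to the complex block matrix `[[M^S, -conj(M^P)], [M^P, conj(M^S)]]`. -/
def psi {I J : Type*} (M : Matrix I J (Quaternion ℝ)) :
    Matrix (I ⊕ I) (J ⊕ J) ℂ :=
  Matrix.fromBlocks (M.map Sc) (-((M.map Pc).map (starRingEnd ℂ)))
    (M.map Pc) ((M.map Sc).map (starRingEnd ℂ))

variable {V : Type*}

/-- The quaternionic weighted matrix W: `W u v = w((u,v))` if `(u,v)` is an arc, else 0. -/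
def quatWeightMatrix [Fintype V] [DecidableEq V] (G : SimpleGraph V) [DecidableRel G.Adj]
    (w : G.Dart → Quaternion ℝ) : Matrix V V (Quaternion ℝ) := fun u v =>
  if h : G.Adj u v then w ⟨(u, v), h⟩ else 0

/-- The quaternionic weighted arc matrix B_w: `(B_w) e f = w(f)` if `t(e) = o(f)`, else 0. -/
def quatArcMatrix [Fintype V] [DecidableEq V] (G : SimpleGraph V) [DecidableRel G.Adj]
    (w : G.Dart → Quaternion ℝ) : Matrix G.Dart G.Dart (Quaternion ℝ) := fun e f =>
  if e.toProd.2 = f.toProd.1 then w f else 0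

/-- The quaternionic arc-inversion matrix J₀: `(J₀) e f = 1` if `f = e⁻¹`, else 0. -/
def quatArcInvMatrix [Fintype V] [DecidableEq V] (G : SimpleGraph V) [DecidableRel G.Adj] :
    Matrix G.Dart G.Dart (Quaternion ℝ) := fun e f =>
  if f = e.symm then 1 else 0

/-- The quaternionic weighted degree matrix D_w: diagonal with
`(D_w)_{uu} = Σ_{e : o(e) = u} w(e)`. -/
def quatDegMatrix [Fintype V] [DecidableEq V] (G : SimpleGraph V) [DecidableRel G.Adj]
    (w : G.Dart → Quaternion ℝ) : Matrix V V (Quaternion ℝ) :=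
  Matrix.diagonal fun u => ∑ e : G.Dart, if e.toProd.1 = u then w e else 0

/-- The 2m×n matrix K: `K e v = w(e)` if `o(e) = v`, else 0. -/
def quatKMatrix [Fintype V] [DecidableEq V] (G : SimpleGraph V) [DecidableRel G.Adj]
    (w : G.Dart → Quaternion ℝ) : Matrix G.Dart V (Quaternion ℝ) := fun e v =>
  if e.toProd.1 = v then w e else 0

/-- The 2m×n matrix L: `L e v = 1` if `t(e) = v`, else 0. -/
def quatLMatrix [Fintype V] [DecidableEq V] (G : SimpleGraph V) [DecidableRel G.Adj] :
    Matrix G.Dart V (Quaternion ℝ) := fun e v =>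
  if e.toProd.2 = v then 1 else 0

/-- `Sc` as an additive monoid hom. -/
def ScA : Quaternion ℝ →+ ℂ where
  toFun := Sc
  map_zero' := by apply Complex.ext <;> simp [Sc, Quaternion.re_zero, Quaternion.imI_zero]
  map_add' p q := by apply Complex.ext <;> simp [Sc]

/-- `Pc` as an additive monoid hom. -/
def PcA : Quaternion ℝ →+ ℂ where
  toFun := Pc
  map_zero' := by apply Complex.ext <;> simp [Pc, Quaternion.imJ_zero, Quaternion.imK_zero]
  map_add' p q := by apply Complex.ext <;> simp [Pc] <;> ring

lemma Sc_zero : Sc 0 = 0 := by apply Complex.ext <;> simp [Sc, Quaternion.re_zero, Quaternion.imI_zero]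

lemma Pc_zero : Pc 0 = 0 := by apply Complex.ext <;> simp [Pc, Quaternion.imJ_zero, Quaternion.imK_zero]

lemma Sc_one : Sc 1 = 1 := by apply Complex.ext <;> simp [Sc, Quaternion.re_one, Quaternion.imI_one]

lemma Pc_one : Pc 1 = 0 := by apply Complex.ext <;> simp [Pc, Quaternion.imJ_one, Quaternion.imK_one]

lemma Sc_mul (p q : Quaternion ℝ) :
    Sc (p * q) = Sc p * Sc q - (starRingEnd ℂ) (Pc p) * Pc q := by
  apply Complex.ext <;> simp [Sc, Pc, Quaternion.re_mul, Quaternion.imI_mul, Complex.mul_re,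
    Complex.mul_im] <;> ring

lemma Pc_mul (p q : Quaternion ℝ) :
    Pc (p * q) = (starRingEnd ℂ) (Sc p) * Pc q + Pc p * Sc q := by
  apply Complex.ext <;> simp [Sc, Pc, Quaternion.imJ_mul, Quaternion.imK_mul, Complex.mul_re,
    Complex.mul_im] <;> ring

lemma Sc_sum {α : Type*} (s : Finset α) (f : α → Quaternion ℝ) :
    Sc (∑ x ∈ s, f x) = ∑ x ∈ s, Sc (f x) := map_sum ScA f s

lemma Pc_sum {α : Type*} (s : Finset α) (f : α → Quaternion ℝ) :
    Pc (∑ x ∈ s, f x) = ∑ x ∈ s, Pc (f x) := map_sum PcA f s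

lemma psi_mul {I J K : Type*} [Fintype J] (M : Matrix I J (Quaternion ℝ))
    (N : Matrix J K (Quaternion ℝ)) : psi (M * N) = psi M * psi N := by
  have h11 : (M * N).map Sc =
      M.map Sc * N.map Sc + (-((M.map Pc).map (starRingEnd ℂ))) * N.map Pc := by
    ext i k : 1
    simp only [Matrix.map_apply, Matrix.add_apply, Matrix.mul_apply,
      Matrix.neg_apply, Sc_sum, Pc_sum, map_sum, Sc_mul, Pc_mul,
      ← Finset.sum_add_distrib]
    exact Finset.sum_congr rfl fun j _ => by ring
  have h12 : -(((M * N).map Pc).map (starRingEnd ℂ)) =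
      M.map Sc * (-((N.map Pc).map (starRingEnd ℂ))) +
        (-((M.map Pc).map (starRingEnd ℂ))) * ((N.map Sc).map (starRingEnd ℂ)) := by
    ext i k : 1
    simp only [Matrix.map_apply, Matrix.add_apply, Matrix.mul_apply,
      Matrix.neg_apply, Sc_sum, Pc_sum, map_sum, Sc_mul, Pc_mul, map_add,
      map_sub, _root_.map_mul, Complex.conj_conj, ← Finset.sum_neg_distrib,
      ← Finset.sum_add_distrib]
    exact Finset.sum_congr rfl fun j _ => by ring
  have h21 : (M * N).map Pc =
      M.map Pc * N.map Sc + ((M.map Sc).map (starRingEnd ℂ)) * N.map Pc := by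
    ext i k : 1
    simp only [Matrix.map_apply, Matrix.add_apply, Matrix.mul_apply,
      Matrix.neg_apply, Sc_sum, Pc_sum, map_sum, Sc_mul, Pc_mul,
      ← Finset.sum_add_distrib]
    exact Finset.sum_congr rfl fun j _ => by ring
  have h22 : ((M * N).map Sc).map (starRingEnd ℂ) =
      M.map Pc * (-((N.map Pc).map (starRingEnd ℂ))) +
        ((M.map Sc).map (starRingEnd ℂ)) * ((N.map Sc).map (starRingEnd ℂ)) := by
    ext i k : 1
    simp only [Matrix.map_apply, Matrix.add_apply, Matrix.mul_apply,
      Matrix.neg_apply, Sc_sum, Pc_sum, map_sum, Sc_mul, Pc_mul, map_add,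
      map_sub, _root_.map_mul, Complex.conj_conj, ← Finset.sum_neg_distrib,
      ← Finset.sum_add_distrib]
    exact Finset.sum_congr rfl fun j _ => by ring
  unfold psi
  rw [Matrix.fromBlocks_multiply, h12, h21, h22, h11]

lemma psi_one {I : Type*} [DecidableEq I] :
    psi (1 : Matrix I I (Quaternion ℝ)) = 1 := by
  unfold psi
  have h1 : (1 : Matrix I I (Quaternion ℝ)).map Sc = 1 := by
    ext i j : 1
    simp only [Matrix.map_apply, Matrix.one_apply]
    split_ifs <;> simp [Sc_one, Sc_zero]
  have h2 : (1 : Matrix I I (Quaternion ℝ)).map Pc = 0 := by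
    ext i j : 1
    simp only [Matrix.map_apply, Matrix.one_apply, Matrix.zero_apply]
    split_ifs <;> simp [Pc_one, Pc_zero]
  rw [h1, h2]
  simp [Matrix.fromBlocks_one]

lemma arcInv_sq [Fintype V] [DecidableEq V] (G : SimpleGraph V) [DecidableRel G.Adj] :
    quatArcInvMatrix G * quatArcInvMatrix G = 1 := by
  ext e f : 1
  simp only [Matrix.mul_apply, quatArcInvMatrix, ite_mul, one_mul, zero_mul,
    Matrix.one_apply]
  rw [Finset.sum_ite_eq' Finset.univ e.symm (fun g => if f = g.symm then (1 : Quaternion ℝ) else 0)]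
  simp only [Finset.mem_univ, if_true, SimpleGraph.Dart.symm_symm]
  by_cases h : f = e
  · subst h; simp
  · rw [if_neg h, if_neg (Ne.symm h)]

lemma LK_eq [Fintype V] [DecidableEq V] (G : SimpleGraph V) [DecidableRel G.Adj]
    (w : G.Dart → Quaternion ℝ) :
    (quatLMatrix G)ᵀ * quatKMatrix G w = (quatWeightMatrix G w)ᵀ := by
  ext u v : 1
  simp only [Matrix.mul_apply, Matrix.transpose_apply, quatLMatrix, quatKMatrix,
    quatWeightMatrix, ite_mul, one_mul, zero_mul]
  have : ∀ e : G.Dart,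
      (if e.toProd.2 = u then if e.toProd.1 = v then w e else 0 else 0) =
        (if e.toProd = (v, u) then w e else 0) := by
    intro e
    by_cases h1 : e.toProd.2 = u <;> by_cases h2 : e.toProd.1 = v <;>
      simp [h1, h2, Prod.ext_iff]
  rw [Finset.sum_congr rfl fun e _ => this e]
  by_cases h : G.Adj v u
  · rw [Finset.sum_eq_single (⟨(v, u), h⟩ : G.Dart)]
    · rw [if_pos rfl, dif_pos h]
    · intro e _ hne
      rw [if_neg]
      intro hcon
      exact hne (SimpleGraph.Dart.ext _ _ hcon)
    · intro habs; exact absurd (Finset.mem_univ _) habs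
  · rw [dif_neg h]
    apply Finset.sum_eq_zero
    intro e _
    rw [if_neg]
    intro hcon
    have := e.adj
    rw [hcon] at this
    exact h this

lemma LJK_eq [Fintype V] [DecidableEq V] (G : SimpleGraph V) [DecidableRel G.Adj]
    (w : G.Dart → Quaternion ℝ) :
    (quatLMatrix G)ᵀ * quatArcInvMatrix G * quatKMatrix G w = quatDegMatrix G w := by
  have hJK : quatArcInvMatrix G * quatKMatrix G w =
      Matrix.of fun e v => if e.toProd.2 = v then w e.symm else 0 := by
    ext e v : 1
    simp only [Matrix.mul_apply, quatArcInvMatrix, quatKMatrix, ite_mul, one_mul,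
      zero_mul, Matrix.of_apply]
    rw [Finset.sum_ite_eq' Finset.univ e.symm
      (fun g => if g.toProd.1 = v then w g else 0)]
    simp [SimpleGraph.Dart.symm_toProd]
  rw [Matrix.mul_assoc, hJK]
  ext u v : 1
  simp only [Matrix.mul_apply, Matrix.transpose_apply, quatLMatrix, quatDegMatrix,
    Matrix.diagonal_apply, ite_mul, one_mul, zero_mul, Matrix.of_apply]
  by_cases h : u = v
  · subst h
    simp only [if_true]
    have key : ∀ e : G.Dart,
        (if e.toProd.2 = u then if e.toProd.2 = u then w e.symm else 0 else 0) =
          (if e.toProd.2 = u then w e.symm else 0) := by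
      intro e; by_cases h1 : e.toProd.2 = u <;> simp [h1]
    rw [Finset.sum_congr rfl fun e _ => key e]
    have hequiv : (⟨SimpleGraph.Dart.symm, SimpleGraph.Dart.symm,
        SimpleGraph.Dart.symm_symm, SimpleGraph.Dart.symm_symm⟩ :
          G.Dart ≃ G.Dart) = _ := rfl
    refine Fintype.sum_equiv (⟨SimpleGraph.Dart.symm, SimpleGraph.Dart.symm,
        SimpleGraph.Dart.symm_symm, SimpleGraph.Dart.symm_symm⟩ :
          G.Dart ≃ G.Dart) _ _ ?_
    intro e
    simp [SimpleGraph.Dart.symm_toProd]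
  · rw [if_neg h]
    apply Finset.sum_eq_zero
    intro e _
    by_cases h1 : e.toProd.2 = u <;> by_cases h2 : e.toProd.2 = v <;>
      simp_all

/-- for t ∈ ℂ with t² ≠ 1,
ψ(ᵀL)(I_{4m} + tψ(J₀))⁻¹ψ(K) = (1−t²)⁻¹ψ(ᵀW) − t(1−t²)⁻¹ψ(D_w). -/
theorem quat_middle_identity [Fintype V] [DecidableEq V] (G : SimpleGraph V)
    [DecidableRel G.Adj] (hG : G.Connected) (w : G.Dart → Quaternion ℝ)
    (t : ℂ) (ht : t ^ 2 ≠ 1) :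
    psi ((quatLMatrix G)ᵀ) *
        ((1 : Matrix (G.Dart ⊕ G.Dart) (G.Dart ⊕ G.Dart) ℂ) +
          t • psi (quatArcInvMatrix G))⁻¹ * psi (quatKMatrix G w) =
      (1 - t ^ 2)⁻¹ • psi ((quatWeightMatrix G w)ᵀ) -
        (t * (1 - t ^ 2)⁻¹) • psi (quatDegMatrix G w) := by
  set P : Matrix (G.Dart ⊕ G.Dart) (G.Dart ⊕ G.Dart) ℂ := psi (quatArcInvMatrix G) with hPdef
  have hP2 : P * P = 1 := by
    rw [hPdef, ← psi_mul, arcInv_sq, psi_one]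
  have hne : (1 : ℂ) - t ^ 2 ≠ 0 := sub_ne_zero.mpr (Ne.symm ht)
  have hinv : ((1 : Matrix (G.Dart ⊕ G.Dart) (G.Dart ⊕ G.Dart) ℂ) + t • P) *
      ((1 - t ^ 2)⁻¹ • (1 - t • P)) = 1 := by
    rw [Matrix.mul_smul, add_mul, mul_sub, mul_sub, one_mul, one_mul,
      Matrix.smul_mul, Matrix.smul_mul, Matrix.mul_smul, hP2, Matrix.mul_one]
    have : (1 : Matrix (G.Dart ⊕ G.Dart) (G.Dart ⊕ G.Dart) ℂ) - t • P +
        (t • P - t • t • (1 : Matrix (G.Dart ⊕ G.Dart) (G.Dart ⊕ G.Dart) ℂ)) =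
        (1 - t ^ 2) • 1 := by
      rw [smul_smul, ← pow_two, sub_smul, one_smul]
      abel
    rw [this, smul_smul, inv_mul_cancel₀ hne, one_smul]
  rw [Matrix.inv_eq_right_inv hinv]
  rw [Matrix.mul_smul, Matrix.smul_mul, Matrix.mul_sub, Matrix.sub_mul,
    Matrix.mul_one, Matrix.mul_smul, Matrix.smul_mul]
  rw [hPdef, ← psi_mul, ← psi_mul, ← psi_mul, LK_eq, LJK_eq]
  rw [smul_sub, smul_smul]
  ring_nf
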